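/- Let S be a convex compact subset of ℝ^M and f : ℝ^M → ℝ^M a map that is Lipschitz on S with constant L and satisfies the one-sided Lipschitz condition on S with constant λ = 0, i.e. ⟪f(y₁) − f(y₂), y₁ − y₂⟫ ≤ 0 for all y₁, y₂ ∈ S. Set C = sup_{y∈S} L·‖f(y)‖. Let y₀, z₀ ∈ S with ‖y₀ − z₀‖ ≤ ε, let y : [0,τ] → S solve y′(t) = f(y(t)) with y(0) = y₀, and let ỹ(t) = z₀ + t·f(z₀) be the explicit Euler approximation, assumed to remain in S for t ∈ [0,τ]. Then for all t ∈ [0,τ]: ‖y(t) − ỹ(t)‖ ≤ ( ε²·e^{t} + C²·( −t² − 2t + 2(e^{t} − 1) ) )^{1/2}. -/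

import Mathlib

open Set Real
open scoped RealInnerProductSpace

/-- Euler error bound for a one-sided Lipschitz vector field with zero
OSL constant (Proposition 1, case `λ = 0`). -/
theorem euler_error_bound_zero_osl {M : ℕ}
    (S : Set (EuclideanSpace ℝ (Fin M)))
    (hSconv : Convex ℝ S) (hScomp : IsCompact S)
    (f : EuclideanSpace ℝ (Fin M) → EuclideanSpace ℝ (Fin M))
    (L C ε τ : ℝ)
    (hLip : ∀ y₁ ∈ S, ∀ y₂ ∈ S, ‖f y₁ - f y₂‖ ≤ L * ‖y₁ - y₂‖)
    (hOSL : ∀ y₁ ∈ S, ∀ y₂ ∈ S,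
      ⟪f y₁ - f y₂, y₁ - y₂⟫ ≤ (0 : ℝ))
    (hC : IsLUB ((fun y => L * ‖f y‖) '' S) C)
    (y₀ z₀ : EuclideanSpace ℝ (Fin M)) (hy₀S : y₀ ∈ S) (hz₀S : z₀ ∈ S)
    (hyz : ‖y₀ - z₀‖ ≤ ε)
    (y : ℝ → EuclideanSpace ℝ (Fin M))
    (hy0 : y 0 = y₀)
    (hyS : ∀ t ∈ Icc (0 : ℝ) τ, y t ∈ S)
    (hy' : ∀ t ∈ Icc (0 : ℝ) τ, HasDerivAt y (f (y t)) t)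
    (hEulerS : ∀ t ∈ Icc (0 : ℝ) τ, z₀ + t • f z₀ ∈ S) :
    ∀ t ∈ Icc (0 : ℝ) τ,
      ‖y t - (z₀ + t • f z₀)‖ ≤
        Real.sqrt (ε ^ 2 * Real.exp t +
          C ^ 2 * (-t ^ 2 - 2 * t + 2 * (Real.exp t - 1))) := by
  intro t ht
  obtain ⟨ht0, htτ⟩ := ht
  set g : ℝ → ℝ := fun s => ⟪y s - (z₀ + s • f z₀), y s - (z₀ + s • f z₀)⟫ with hgdef
  set φ : ℝ → ℝ := fun s =>
    ε ^ 2 * Real.exp s + C ^ 2 * (-s ^ 2 - 2 * s + 2 * (Real.exp s - 1)) with hφdef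
  set ψ : ℝ → ℝ := fun s => (g s - φ s) * Real.exp (-s) with hψdef
  -- derivative of g
  have hed : ∀ s ∈ Icc (0 : ℝ) τ,
      HasDerivAt (fun u => y u - (z₀ + u • f z₀)) (f (y s) - f z₀) s := by
    intro s hs
    have h1 : HasDerivAt (fun u : ℝ => z₀ + u • f z₀) (f z₀) s := by
      have := ((hasDerivAt_id s).smul_const (f z₀)).const_add z₀
      simpa using this
    exact (hy' s hs).sub h1
  have hgd : ∀ s ∈ Icc (0 : ℝ) τ,
      HasDerivAt g (2 * ⟪f (y s) - f z₀, y s - (z₀ + s • f z₀)⟫) s := by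
    intro s hs
    have := (hed s hs).inner ℝ (hed s hs)
    have h2 : (⟪y s - (z₀ + s • f z₀), f (y s) - f z₀⟫ : ℝ) +
        ⟪f (y s) - f z₀, y s - (z₀ + s • f z₀)⟫
        = 2 * ⟪f (y s) - f z₀, y s - (z₀ + s • f z₀)⟫ := by
      rw [real_inner_comm]; ring
    rw [h2] at this
    exact this
  -- derivative of φ
  have hφd : ∀ s : ℝ, HasDerivAt φ (φ s + C ^ 2 * s ^ 2) s := by
    intro s
    have h1 : HasDerivAt (fun u : ℝ => ε ^ 2 * Real.exp u) (ε ^ 2 * Real.exp s) s :=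
      (Real.hasDerivAt_exp s).const_mul (ε ^ 2)
    have h2 : HasDerivAt (fun u : ℝ => -u ^ 2 - 2 * u + 2 * (Real.exp u - 1))
        (-(2 * s) - 2 + 2 * Real.exp s) s := by
      have ha : HasDerivAt (fun u : ℝ => -u ^ 2) (-(2 * s)) s := by
        simpa [Pi.neg_def] using ((hasDerivAt_pow 2 s).neg)
      have hb : HasDerivAt (fun u : ℝ => 2 * u) (2 : ℝ) s := by
        simpa using (hasDerivAt_id s).const_mul (2 : ℝ)
      have hc : HasDerivAt (fun u : ℝ => 2 * (Real.exp u - 1)) (2 * Real.exp s) s := by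
        simpa using ((Real.hasDerivAt_exp s).sub_const 1).const_mul (2 : ℝ)
      exact (ha.sub hb).add hc
    have := h1.add (h2.const_mul (C ^ 2))
    refine this.congr_deriv ?_
    simp only [hφdef]
    ring
  -- derivative of ψ
  have hexp : ∀ s : ℝ, HasDerivAt (fun u : ℝ => Real.exp (-u)) (-Real.exp (-s)) s := by
    intro s
    have := (hasDerivAt_neg s).exp
    simpa using this
  have hψd : ∀ s ∈ Icc (0 : ℝ) τ,
      HasDerivAt ψ
        ((2 * ⟪f (y s) - f z₀, y s - (z₀ + s • f z₀)⟫ - (φ s + C ^ 2 * s ^ 2)) *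
            Real.exp (-s) + (g s - φ s) * -Real.exp (-s)) s := by
    intro s hs
    exact ((hgd s hs).sub (hφd s)).mul (hexp s)
  -- key pointwise inequality on the interior
  have key : ∀ s ∈ Icc (0 : ℝ) τ, 0 ≤ s →
      2 * ⟪f (y s) - f z₀, y s - (z₀ + s • f z₀)⟫ ≤ g s + C ^ 2 * s ^ 2 := by
    intro s hs hs0
    set e := y s - (z₀ + s • f z₀) with he
    have hyts : (z₀ + s • f z₀) ∈ S := hEulerS s hs
    have hys : y s ∈ S := hyS s hs
    have hsplit : (⟪f (y s) - f z₀, e⟫ : ℝ) =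
        ⟪f (y s) - f (z₀ + s • f z₀), e⟫ + ⟪f (z₀ + s • f z₀) - f z₀, e⟫ := by
      rw [← inner_add_left]
      congr 1
      abel
    have h1 : (⟪f (y s) - f (z₀ + s • f z₀), e⟫ : ℝ) ≤ 0 := hOSL _ hys _ hyts
    have h2 : (⟪f (z₀ + s • f z₀) - f z₀, e⟫ : ℝ) ≤ C * s * ‖e‖ := by
      have hcs := real_inner_le_norm (f (z₀ + s • f z₀) - f z₀) e
      have hLb : ‖f (z₀ + s • f z₀) - f z₀‖ ≤ L * ‖f z₀‖ * s := by
        have := hLip _ hyts _ hz₀S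
        have hnorm : ‖z₀ + s • f z₀ - z₀‖ = s * ‖f z₀‖ := by
          simp [norm_smul, abs_of_nonneg hs0]
        rw [hnorm] at this
        linarith [this]
      have hCz : L * ‖f z₀‖ ≤ C := hC.1 ⟨z₀, hz₀S, rfl⟩
      have hn : (0:ℝ) ≤ ‖e‖ := norm_nonneg e
      calc (⟪f (z₀ + s • f z₀) - f z₀, e⟫ : ℝ) ≤ ‖f (z₀ + s • f z₀) - f z₀‖ * ‖e‖ := hcs
        _ ≤ (L * ‖f z₀‖ * s) * ‖e‖ := by
            apply mul_le_mul_of_nonneg_right _ hn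
            exact hLb
        _ ≤ (C * s) * ‖e‖ := by
            apply mul_le_mul_of_nonneg_right _ hn
            exact mul_le_mul_of_nonneg_right hCz hs0
        _ = C * s * ‖e‖ := rfl
    have hge : g s = ‖e‖ ^ 2 := by
      simp only [hgdef, he, real_inner_self_eq_norm_sq]
    rw [hge]
    nlinarith [hsplit, h1, h2, sq_nonneg (C * s - ‖e‖)]
  -- ψ is antitone on [0, τ]
  have hψanti : AntitoneOn ψ (Icc 0 τ) := by
    apply antitoneOn_of_deriv_nonpos (convex_Icc 0 τ)
    · intro s hs
      exact ((hψd s hs).continuousAt).continuousWithinAt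
    · intro s hs
      rw [interior_Icc] at hs
      exact ((hψd s (Ioo_subset_Icc_self hs)).differentiableAt).differentiableWithinAt
    · intro s hs
      rw [interior_Icc] at hs
      have hs' : s ∈ Icc (0 : ℝ) τ := Ioo_subset_Icc_self hs
      rw [(hψd s hs').deriv]
      have hk := key s hs' (le_of_lt hs.1)
      have hφeq : g s - (φ s + C ^ 2 * s ^ 2) + C ^ 2 * s ^ 2 = g s - φ s := by ring
      have he : (0:ℝ) < Real.exp (-s) := Real.exp_pos _
      nlinarith [hk, he]
  -- conclude
  have h0mem : (0 : ℝ) ∈ Icc (0 : ℝ) τ := ⟨le_refl 0, le_trans ht0 htτ⟩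
  have htmem : t ∈ Icc (0 : ℝ) τ := ⟨ht0, htτ⟩
  have hψt : ψ t ≤ ψ 0 := hψanti h0mem htmem ht0
  have hψ0 : ψ 0 ≤ 0 := by
    have hg0 : g 0 = ‖y₀ - z₀‖ ^ 2 := by
      simp only [hgdef, hy0, real_inner_self_eq_norm_sq]
      norm_num
    have hφ0 : φ 0 = ε ^ 2 := by simp [hφdef]
    have hne : ‖y₀ - z₀‖ ^ 2 ≤ ε ^ 2 := by
      nlinarith [norm_nonneg (y₀ - z₀), hyz]
    simp only [hψdef, hg0, hφ0, neg_zero, Real.exp_zero, mul_one]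
    linarith
  have hgt : g t ≤ φ t := by
    have he : (0:ℝ) < Real.exp (-t) := Real.exp_pos _
    have : (g t - φ t) * Real.exp (-t) ≤ 0 := le_trans hψt hψ0
    nlinarith
  have hgnn : g t = ‖y t - (z₀ + t • f z₀)‖ ^ 2 := by
    simp only [hgdef, real_inner_self_eq_norm_sq]
  have hφnn : 0 ≤ φ t := le_trans (by rw [hgnn]; positivity) hgt
  rw [Real.le_sqrt (norm_nonneg _) hφnn]
  rw [← hgnn]
  exact hgt
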